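/- Fix n ≥ 1. Let p : Fin M → (Fin n → A) × T be a greedy n-tuple sequence and let φ : T → (Fin n → A) be any feasible n-tuple assignment. Then there exists a map F : T → T such that (i) for every target t, w (φ t) t ≤ w ((p h).1) ((p h).2) where h is the unique index with (p h).2 = F t, and (ii) for every target y, the set {t | F t = y} has at most n + 1 elements. -/

import Mathlib

/-- Charging-map existence in the proof of Remark 1: given a greedy `n`-tuple
sequence `p` and a feasible `n`-tuple assignment `φ`, there is a map `F : T → T`
such that the quality of the optimal `(n+1)`-tuple for `t` is at most the greedy
quality of the step whose target is `F t`, and every fiber of `F` has at most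
`n + 1` elements. -/
theorem greedy_tuple_charging_map_exists
    {A R T : Type*} [Fintype A] [Fintype R] [Fintype T]
    (n : ℕ) (hn : 1 ≤ n)
    (M : ℕ) (hM : Fintype.card T = M)
    (r : A → R) (w : (Fin n → A) → T → ℝ)
    (hw : ∀ a t, 0 ≤ w a t)
    (hsym : ∀ (σ : Equiv.Perm (Fin n)) (a : Fin n → A) (t : T),
      w (a ∘ σ) t = w a t)
    (p : Fin M → (Fin n → A) × T)
    (htar : Function.Bijective (fun h => (p h).2))
    (hrob : Function.Injective (fun x : Fin M × Fin n => r ((p x.1).1 x.2)))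
    (hgreedy : ∀ h : Fin M, ∀ a : Fin n → A, ∀ t : T,
      Function.Injective (fun i => r (a i)) →
      (∀ i : Fin n, ∀ g, g < h → ∀ i' : Fin n, r (a i) ≠ r ((p g).1 i')) →
      (∀ g, g < h → t ≠ (p g).2) →
      w a t ≤ w (p h).1 (p h).2)
    (φ : T → Fin n → A)
    (hφ : Function.Injective (fun x : T × Fin n => r (φ x.1 x.2))) :
    ∃ F : T → T,
      (∀ t : T, ∀ h : Fin M, (p h).2 = F t → w (φ t) t ≤ w (p h).1 (p h).2) ∧
      (∀ y : T, ({t | F t = y} : Set T).ncard ≤ n + 1) := by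
  classical
  -- the set of "blocking" steps for a target t
  set S : T → Finset (Fin M) := fun t =>
    Finset.univ.filter (fun h => (p h).2 = t ∨ ∃ i j : Fin n, r (φ t i) = r ((p h).1 j))
    with hS
  have hSne : ∀ t, (S t).Nonempty := by
    intro t
    obtain ⟨h, hh⟩ := htar.2 t
    exact ⟨h, by simp [hS, hh]⟩
  set hmin : T → Fin M := fun t => (S t).min' (hSne t) with hhmin
  refine ⟨fun t => (p (hmin t)).2, ?_, ?_⟩
  · intro t h0 hh0
    have heq : h0 = hmin t := htar.1 hh0
    rw [heq]
    apply hgreedy (hmin t) (φ t) t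
    · intro i j hij
      have := hφ (a₁ := (t, i)) (a₂ := (t, j)) hij
      exact (Prod.mk.injEq _ _ _ _ ▸ this).2
    · intro i g hg i' heq
      have hgS : g ∈ S t := by
        simp only [hS, Finset.mem_filter, Finset.mem_univ, true_and]
        exact Or.inr ⟨i, i', heq⟩
      exact absurd ((S t).min'_le g hgS) (not_le.mpr hg)
    · intro g hg heq
      have hgS : g ∈ S t := by
        simp only [hS, Finset.mem_filter, Finset.mem_univ, true_and]
        exact Or.inl heq.symm
      exact absurd ((S t).min'_le g hgS) (not_le.mpr hg)
  · intro y
    obtain ⟨hy, hhy⟩ := htar.2 y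
    -- the charging function to Option (Fin n)
    set G : T → Option (Fin n) := fun t =>
      if h : ∃ jp : Fin n × Fin n, r (φ t jp.2) = r ((p hy).1 jp.1) then some h.choose.1
      else none with hG
    have key : ∀ t, (p (hmin t)).2 = y → hmin t = hy := by
      intro t ht
      exact htar.1 (show (p (hmin t)).2 = (p hy).2 from ht.trans hhy.symm)
    have hfin : ({t | (p (hmin t)).2 = y} : Set T).Finite := Set.toFinite _
    have : Set.InjOn G {t | (p (hmin t)).2 = y} := by
      intro t1 ht1 t2 ht2 hG12
      have hm1 := key t1 ht1
      have hm2 := key t2 ht2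
      have hmem1 : hmin t1 ∈ S t1 := (S t1).min'_mem (hSne t1)
      have hmem2 : hmin t2 ∈ S t2 := (S t2).min'_mem (hSne t2)
      rw [hm1] at hmem1
      rw [hm2] at hmem2
      simp only [hS, Finset.mem_filter, Finset.mem_univ, true_and] at hmem1 hmem2
      by_cases hex1 : ∃ jp : Fin n × Fin n, r (φ t1 jp.2) = r ((p hy).1 jp.1)
      · have hex2 : ∃ jp : Fin n × Fin n, r (φ t2 jp.2) = r ((p hy).1 jp.1) := by
          by_contra hne
          simp only [hG, dif_pos hex1, dif_neg hne] at hG12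
          exact Option.some_ne_none _ hG12
        have spec1 := hex1.choose_spec
        have spec2 := hex2.choose_spec
        have hjj : hex1.choose.1 = hex2.choose.1 := by
          simp only [hG, dif_pos hex1, dif_pos hex2, Option.some.injEq] at hG12
          exact hG12
        rw [hjj] at spec1
        have : r (φ t1 hex1.choose.2) = r (φ t2 hex2.choose.2) := spec1.trans spec2.symm
        have := hφ (a₁ := (t1, hex1.choose.2)) (a₂ := (t2, hex2.choose.2)) this
        exact (Prod.mk.injEq _ _ _ _ ▸ this).1
      · have hex2 : ¬ ∃ jp : Fin n × Fin n, r (φ t2 jp.2) = r ((p hy).1 jp.1) := by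
          by_contra hne
          simp only [hG, dif_pos hne, dif_neg hex1] at hG12
          exact Option.some_ne_none _ hG12.symm
        have ht1y : t1 = y := by
          rcases hmem1 with h | ⟨i, j, hij⟩
          · exact hhy ▸ h.symm
          · exact absurd ⟨(j, i), hij⟩ hex1
        have ht2y : t2 = y := by
          rcases hmem2 with h | ⟨i, j, hij⟩
          · exact hhy ▸ h.symm
          · exact absurd ⟨(j, i), hij⟩ hex2
        rw [ht1y, ht2y]
    calc ({t | (p (hmin t)).2 = y} : Set T).ncard
        ≤ (G '' {t | (p (hmin t)).2 = y}).ncard := by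
          rw [Set.ncard_image_of_injOn this]
      _ ≤ (Set.univ : Set (Option (Fin n))).ncard :=
          Set.ncard_le_ncard (Set.subset_univ _) (Set.toFinite _)
      _ = n + 1 := by simp [Set.ncard_univ]
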